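/- A diagonally symmetric n-partite matrix X is separable (a non-negative combination of |v⟩⟨v|^{⊗n}) if and only if the symmetric tensor Q[X] with Q[X]_i = ⟨i|X|i⟩ is completely positive, i.e., a finite sum of tensor powers v^{⊗n} of entrywise non-negative vectors v ∈ ℝ_+^d. -/

import Mathlib

open ComplexOrder

/-- The permutation operator `P_σ` on `(ℂ^d)^{⊗ι}`, sending `|i⟩` to `|i ∘ σ⁻¹⟩`. -/
def permMatrix (ι : Type) [Fintype ι] [DecidableEq ι] (d : ℕ) (σ : Equiv.Perm ι) :
    Matrix (ι → Fin d) (ι → Fin d) ℂ :=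
  Matrix.of fun a b => if a = (fun k => b (σ⁻¹ k)) then 1 else 0

/-- The orthogonal projection `Π = (1/n!) ∑_σ P_σ` onto the symmetric subspace. -/
noncomputable def symProj (ι : Type) [Fintype ι] [DecidableEq ι] (d : ℕ) :
    Matrix (ι → Fin d) (ι → Fin d) ℂ :=
  ((Nat.factorial (Fintype.card ι) : ℂ))⁻¹ • ∑ σ : Equiv.Perm ι, permMatrix ι d σ

/-- A matrix is diagonally symmetric if it is supported on the symmetric subspace
(`Π X Π = X`) and commutes with `U^{⊗n}` for every diagonal unitary `U`. -/
def IsDS (ι : Type) [Fintype ι] [DecidableEq ι] (d : ℕ)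
    (X : Matrix (ι → Fin d) (ι → Fin d) ℂ) : Prop :=
  symProj ι d * X * symProj ι d = X ∧
  ∀ θ : Fin d → ℝ,
    Matrix.diagonal (fun i : ι → Fin d => ∏ k, Complex.exp ((θ (i k) : ℂ) * Complex.I)) * X =
      X * Matrix.diagonal fun i : ι → Fin d => ∏ k, Complex.exp ((θ (i k) : ℂ) * Complex.I)

/-- Merge an assignment on the complement of `A` with an assignment on `A` into a full
multi-index. -/
def merge {n d : ℕ} (A : Finset (Fin n)) (j : {k : Fin n // k ∉ A} → Fin d)
    (i : {k : Fin n // k ∈ A} → Fin d) : Fin n → Fin d :=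
  fun k => if h : k ∈ A then i ⟨k, h⟩ else j ⟨k, h⟩


open Finset Complex

section Aux
variable {n d : ℕ}

variable {n d : ℕ}

/-- count of color j in multi-index a -/
def cnt (a : Fin n → Fin d) (j : Fin d) : ℕ := (Finset.univ.filter (fun k => a k = j)).card


lemma cnt_comp (a : Fin n → Fin d) (σ : Equiv.Perm (Fin n)) : cnt (a ∘ σ) = cnt a := by
  funext j
  unfold cnt
  apply Finset.card_bij (fun k _ => σ k)
  · intro k hk; simpa using (Finset.mem_filter.mp hk).2
  · intro k _ k' _ h; exact σ.injective h
  · intro k hk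
    exact ⟨σ⁻¹ k, by simpa using (Finset.mem_filter.mp hk).2, by simp⟩

lemma exists_perm_of_cnt_eq {a b : Fin n → Fin d} (h : cnt a = cnt b) :
    ∃ σ : Equiv.Perm (Fin n), b = a ∘ σ := by
  have hcard : ∀ j : Fin d, Fintype.card {k // b k = j} = Fintype.card {k // a k = j} := by
    intro j
    simp only [Fintype.card_subtype]
    exact (congrFun h j).symm
  let e : ∀ j : Fin d, {k // b k = j} ≃ {k // a k = j} := fun j =>
    Fintype.equivOfCardEq (hcard j)
  refine ⟨((Equiv.sigmaFiberEquiv b).symm.trans (Equiv.sigmaCongrRight e)).trans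
    (Equiv.sigmaFiberEquiv a), ?_⟩
  funext k
  simp only [Function.comp_apply, Equiv.trans_apply, Equiv.sigmaFiberEquiv,
    Equiv.sigmaCongrRight, Equiv.coe_fn_mk, Equiv.coe_fn_symm_mk]
  exact ((e (b k) ⟨k, rfl⟩).2).symm




lemma prod_eq_prod_cnt {M : Type*} [CommMonoid M] (a : Fin n → Fin d) (f : Fin d → M) :
    ∏ k, f (a k) = ∏ j, f j ^ cnt a j := by
  rw [← Finset.prod_fiberwise' Finset.univ a f]
  simp [cnt, Finset.prod_const]

lemma sum_eq_sum_cnt (a : Fin n → Fin d) (f : Fin d → ℤ) :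
    ∑ k, f (a k) = ∑ j, (cnt a j : ℤ) * f j := by
  rw [← Finset.sum_fiberwise' Finset.univ a f]
  simp [cnt, Finset.sum_const, mul_comm]


noncomputable def Ee (N : ℕ) (z : ℤ) : ℂ := Complex.exp (2 * Real.pi * Complex.I * z / N)

lemma prod_Ee {α : Type*} (N : ℕ) (s : Finset α) (f : α → ℤ) :
    ∏ j ∈ s, Ee N (f j) = Ee N (∑ j ∈ s, f j) := by
  simp only [Ee]
  rw [← Complex.exp_sum]
  congr 1
  rw [← Finset.sum_div]
  congr 1
  rw [← Finset.mul_sum]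
  congr 1
  push_cast
  rfl

lemma star_Ee (N : ℕ) (z : ℤ) : star (Ee N z) = Ee N (-z) := by
  simp only [Ee, Complex.star_def, ← Complex.exp_conj, map_div₀, map_mul,
    Complex.conj_I, Complex.conj_ofReal, map_ofNat, map_intCast, map_natCast]
  congr 1
  push_cast
  ring

lemma Ee_nat_mul (N : ℕ) (t : ℕ) (z : ℤ) : Ee N ((t : ℤ) * z) = (Ee N z) ^ t := by
  simp only [Ee]
  rw [← Complex.exp_nat_mul]
  congr 1
  push_cast
  ring

lemma Ee_eq_one_iff (N : ℕ) (hN : 0 < N) (z : ℤ) : Ee N z = 1 ↔ (N : ℤ) ∣ z := by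
  have hNC : (N : ℂ) ≠ 0 := Nat.cast_ne_zero.mpr hN.ne'
  rw [Ee, Complex.exp_eq_one_iff]
  constructor
  · rintro ⟨k, hk⟩
    refine ⟨k, ?_⟩
    have h2 : (2 : ℂ) * Real.pi * Complex.I ≠ 0 := by
      simp [Real.pi_ne_zero, Complex.I_ne_zero]
    have h3 : (z : ℂ) = (((N : ℤ) * k : ℤ) : ℂ) := by
      rw [div_eq_iff hNC] at hk
      apply mul_left_cancel₀ h2
      push_cast at hk ⊢
      linear_combination hk
    exact_mod_cast h3
  · rintro ⟨k, hk⟩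
    refine ⟨k, ?_⟩
    rw [hk]
    push_cast
    field_simp

lemma Ee_pow_N (N : ℕ) (hN : 0 < N) (z : ℤ) : (Ee N z) ^ N = 1 := by
  rw [← Ee_nat_mul]
  exact (Ee_eq_one_iff N hN _).mpr ⟨z, rfl⟩

lemma geom_Ee (N : ℕ) (hN : 0 < N) (z : ℤ) :
    ∑ t : Fin N, Ee N ((t : ℤ) * z) = if (N : ℤ) ∣ z then (N : ℂ) else 0 := by
  have h1 : ∀ t : Fin N, Ee N ((t : ℤ) * z) = (Ee N z) ^ (t : ℕ) := fun t => Ee_nat_mul N (t : ℕ) z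
  rw [Finset.sum_congr rfl (fun t _ => h1 t)]
  rw [Fin.sum_univ_eq_sum_range (fun i => (Ee N z) ^ i) N]
  by_cases hdvd : (N : ℤ) ∣ z
  · rw [if_pos hdvd]
    simp [(Ee_eq_one_iff N hN z).mpr hdvd]
  · rw [if_neg hdvd]
    have hne : Ee N z ≠ 1 := fun h => hdvd ((Ee_eq_one_iff N hN z).mp h)
    rw [geom_sum_eq hne, Ee_pow_N N hN]
    simp

lemma cnt_le' (a : Fin n → Fin d) (j : Fin d) : cnt a j ≤ n := by
  simpa [cnt] using (Finset.card_filter_le Finset.univ (fun k => a k = j)).trans (by simp)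

lemma phase_sum (N : ℕ) (hN : n < N) (a b : Fin n → Fin d) :
    ∑ m : Fin d → Fin N, Ee N ((∑ k, ((m (a k) : ℕ) : ℤ)) - ∑ k, ((m (b k) : ℕ) : ℤ))
      = if cnt a = cnt b then ((N : ℂ)) ^ d else 0 := by
  have hNpos : 0 < N := lt_of_le_of_lt (Nat.zero_le n) hN
  have step1 : ∀ m : Fin d → Fin N,
      Ee N ((∑ k, ((m (a k) : ℕ) : ℤ)) - ∑ k, ((m (b k) : ℕ) : ℤ))
        = ∏ j, Ee N (((m j : ℕ) : ℤ) * ((cnt a j : ℤ) - (cnt b j : ℤ))) := by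
    intro m
    rw [prod_Ee]
    congr 1
    rw [sum_eq_sum_cnt a (fun j => ((m j : ℕ) : ℤ)), sum_eq_sum_cnt b (fun j => ((m j : ℕ) : ℤ))]
    rw [← Finset.sum_sub_distrib]
    exact Finset.sum_congr rfl fun j _ => by ring
  rw [Finset.sum_congr rfl fun m _ => step1 m]
  rw [← Fintype.piFinset_univ,
    ← Finset.prod_univ_sum (fun _ : Fin d => (Finset.univ : Finset (Fin N)))
      (fun j t => Ee N (((t : ℕ) : ℤ) * ((cnt a j : ℤ) - (cnt b j : ℤ))))]
  have step2 : ∀ j : Fin d,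
      (∑ t : Fin N, Ee N (((t : ℕ) : ℤ) * ((cnt a j : ℤ) - (cnt b j : ℤ))))
        = if cnt a j = cnt b j then (N : ℂ) else 0 := by
    intro j
    rw [geom_Ee N hNpos]
    congr 1
    rw [eq_iff_iff]
    constructor
    · intro hdvd
      have habs : |(cnt a j : ℤ) - (cnt b j : ℤ)| < N := by
        rw [abs_lt]
        have h1 : (cnt a j : ℤ) ≤ n := by exact_mod_cast cnt_le' a j
        have h2 : (cnt b j : ℤ) ≤ n := by exact_mod_cast cnt_le' b j
        have h3 : (0:ℤ) ≤ (cnt a j : ℤ) := Int.ofNat_nonneg _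
        have h4 : (0:ℤ) ≤ (cnt b j : ℤ) := Int.ofNat_nonneg _
        have h5 : (n:ℤ) < N := by exact_mod_cast hN
        constructor <;> linarith
      have := Int.eq_zero_of_abs_lt_dvd hdvd habs
      have h6 : (cnt a j : ℤ) = (cnt b j : ℤ) := by linarith [sub_eq_zero.mp this]
      exact_mod_cast h6
    · intro h
      rw [h]
      simp
  rw [Finset.prod_congr rfl fun j _ => step2 j]
  by_cases h : cnt a = cnt b
  · rw [if_pos h]
    rw [Finset.prod_congr rfl fun j _ => if_pos (congrFun h j)]
    simp
  · rw [if_neg h]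
    obtain ⟨j, hj⟩ := Function.ne_iff.mp h
    exact Finset.prod_eq_zero (Finset.mem_univ j) (if_neg hj)

lemma Ee_add (N : ℕ) (z₁ z₂ : ℤ) : Ee N (z₁ + z₂) = Ee N z₁ * Ee N z₂ := by
  simp only [Ee]
  rw [← Complex.exp_add]
  congr 1
  push_cast
  ring

lemma backward_sum (K : ℕ) (w : Fin K → Fin d → ℝ)
    (hw : ∀ q i, 0 ≤ w q i) (c : ℝ)
    (hc2 : c ^ (2 * n) * ((n + 1 : ℕ) : ℝ) ^ d = 1) (a b : Fin n → Fin d) :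
    ∑ p : Fin K × (Fin d → Fin (n + 1)),
        (∏ k, (((c * Real.sqrt (w p.1 (a k)) : ℝ) : ℂ) * Ee (n+1) ((p.2 (a k) : ℕ) : ℤ))) *
          star (∏ k, (((c * Real.sqrt (w p.1 (b k)) : ℝ) : ℂ) * Ee (n+1) ((p.2 (b k) : ℕ) : ℤ)))
      = if cnt a = cnt b then ((∑ q, ∏ k, w q (a k) : ℝ) : ℂ) else 0 := by
  have hN : n < n + 1 := Nat.lt_succ_self n
  have hterm : ∀ (q : Fin K) (m : Fin d → Fin (n+1)),
      (∏ k, (((c * Real.sqrt (w q (a k)) : ℝ) : ℂ) * Ee (n+1) ((m (a k) : ℕ) : ℤ))) *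
        star (∏ k, (((c * Real.sqrt (w q (b k)) : ℝ) : ℂ) * Ee (n+1) ((m (b k) : ℕ) : ℤ)))
      = (((∏ k, c * Real.sqrt (w q (a k))) * (∏ k, c * Real.sqrt (w q (b k))) : ℝ) : ℂ)
          * Ee (n+1) ((∑ k, ((m (a k) : ℕ) : ℤ)) - ∑ k, ((m (b k) : ℕ) : ℤ)) := by
    intro q m
    rw [Finset.prod_mul_distrib, Finset.prod_mul_distrib, prod_Ee, prod_Ee,
        ← Complex.ofReal_prod, ← Complex.ofReal_prod, star_mul']
    rw [star_Ee, Complex.star_def, Complex.conj_ofReal]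
    rw [sub_eq_add_neg, Ee_add]
    push_cast
    ring
  rw [Fintype.sum_prod_type]
  rw [Finset.sum_congr rfl fun q _ => Finset.sum_congr rfl fun m _ => hterm q m]
  have hp : ∀ q : Fin K,
      (∑ m : Fin d → Fin (n+1),
        (((∏ k, c * Real.sqrt (w q (a k))) * (∏ k, c * Real.sqrt (w q (b k))) : ℝ) : ℂ)
          * Ee (n+1) ((∑ k, ((m (a k) : ℕ) : ℤ)) - ∑ k, ((m (b k) : ℕ) : ℤ)))
      = (((∏ k, c * Real.sqrt (w q (a k))) * (∏ k, c * Real.sqrt (w q (b k))) : ℝ) : ℂ)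
          * (if cnt a = cnt b then (((n+1 : ℕ)) : ℂ) ^ d else 0) := by
    intro q
    rw [← Finset.mul_sum, phase_sum (n+1) hN a b]
  rw [Finset.sum_congr rfl fun q _ => hp q]
  by_cases h : cnt a = cnt b
  · rw [if_pos h]
    have hq : ∀ q : Fin K,
        (((∏ k, c * Real.sqrt (w q (a k))) * (∏ k, c * Real.sqrt (w q (b k))) : ℝ) : ℂ)
            * (((n+1 : ℕ)) : ℂ) ^ d
          = ((∏ k, w q (a k) : ℝ) : ℂ) := by
      intro q
      have hbb : (∏ k, c * Real.sqrt (w q (b k))) = ∏ k, c * Real.sqrt (w q (a k)) := by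
        rw [prod_eq_prod_cnt a (fun j => c * Real.sqrt (w q j)),
            prod_eq_prod_cnt b (fun j => c * Real.sqrt (w q j)), h]
      rw [hbb]
      have hreal : (∏ k, c * Real.sqrt (w q (a k))) * (∏ k, c * Real.sqrt (w q (a k)))
          * ((n+1 : ℕ) : ℝ) ^ d = ∏ k, w q (a k) := by
        rw [← Finset.prod_mul_distrib]
        have hsq : ∀ k : Fin n, (c * Real.sqrt (w q (a k))) * (c * Real.sqrt (w q (a k)))
            = c ^ 2 * w q (a k) := fun k => by
          rw [mul_mul_mul_comm, Real.mul_self_sqrt (hw q (a k))]; ring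
        rw [Finset.prod_congr rfl fun k _ => hsq k]
        rw [Finset.prod_mul_distrib, Finset.prod_const, Finset.card_univ, Fintype.card_fin,
          ← pow_mul]
        calc c ^ (2 * n) * (∏ k, w q (a k)) * ((n+1 : ℕ) : ℝ) ^ d
            = (c ^ (2 * n) * ((n+1 : ℕ) : ℝ) ^ d) * ∏ k, w q (a k) := by ring
          _ = ∏ k, w q (a k) := by rw [hc2, one_mul]
      calc (((∏ k, c * Real.sqrt (w q (a k))) * (∏ k, c * Real.sqrt (w q (a k))) : ℝ) : ℂ)
            * (((n+1 : ℕ)) : ℂ) ^ d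
          = (((∏ k, c * Real.sqrt (w q (a k))) * (∏ k, c * Real.sqrt (w q (a k)))
              * ((n+1 : ℕ) : ℝ) ^ d : ℝ) : ℂ) := by push_cast; ring
        _ = ((∏ k, w q (a k) : ℝ) : ℂ) := by rw [hreal]
    rw [Finset.sum_congr rfl fun q _ => hq q, if_pos h, Complex.ofReal_sum]
  · simp [h]



lemma cnt_le (a : Fin n → Fin d) (j : Fin d) : cnt a j ≤ n := by
  simpa [cnt] using (Finset.card_filter_le Finset.univ (fun k => a k = j)).trans (by simp)

lemma sum_theta (t : ℝ) (j : Fin d) (a : Fin n → Fin d) :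
    ∑ k, (if a k = j then t else 0) = (cnt a j : ℝ) * t := by
  rw [← Finset.sum_filter]
  simp [cnt, mul_comm]

lemma X_offtype_zero (X : Matrix (Fin n → Fin d) (Fin n → Fin d) ℂ)
    (hU : ∀ θ : Fin d → ℝ,
      Matrix.diagonal (fun i : Fin n → Fin d => ∏ k, Complex.exp ((θ (i k) : ℂ) * Complex.I)) * X =
        X * Matrix.diagonal fun i : Fin n → Fin d => ∏ k, Complex.exp ((θ (i k) : ℂ) * Complex.I))
    {a b : Fin n → Fin d} (h : cnt a ≠ cnt b) : X a b = 0 := by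
  by_contra hab
  obtain ⟨j, hj⟩ := Function.ne_iff.mp h
  have hn : 0 < n := by
    rcases Nat.eq_zero_or_pos n with h0 | h0
    · subst h0
      have ha0 := Nat.le_zero.mp (cnt_le a j)
      have hb0 := Nat.le_zero.mp (cnt_le b j)
      exact absurd (ha0.trans hb0.symm) hj
    · exact h0
  set t : ℝ := (n : ℝ)⁻¹ with ht
  have htpos : 0 < t := by positivity
  set θ : Fin d → ℝ := fun j' => if j' = j then t else 0 with hθ
  have key := congrFun (congrFun (hU θ) a) b
  rw [Matrix.diagonal_mul, Matrix.mul_diagonal] at key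
  have ea : (∏ k, Complex.exp ((θ (a k) : ℂ) * Complex.I))
      = Complex.exp (((cnt a j : ℝ) * t : ℝ) * Complex.I) := by
    rw [← Complex.exp_sum]
    congr 1
    rw [← Finset.sum_mul]
    congr 1
    push_cast [← sum_theta t j a]
    exact Finset.sum_congr rfl fun k _ => by by_cases hk : a k = j <;> simp [hθ, hk]
  have eb : (∏ k, Complex.exp ((θ (b k) : ℂ) * Complex.I))
      = Complex.exp (((cnt b j : ℝ) * t : ℝ) * Complex.I) := by
    rw [← Complex.exp_sum]
    congr 1
    rw [← Finset.sum_mul]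
    congr 1
    push_cast [← sum_theta t j b]
    exact Finset.sum_congr rfl fun k _ => by by_cases hk : b k = j <;> simp [hθ, hk]
  rw [ea, eb, mul_comm (X a b)] at key
  have hexp := mul_right_cancel₀ hab key
  obtain ⟨m, hm⟩ := Complex.exp_eq_exp_iff_exists_int.mp hexp
  have hm' := hm
  push_cast at hm'
  have hI : (((cnt a j : ℝ) * t - (cnt b j : ℝ) * t - 2 * Real.pi * m : ℝ) : ℂ) * Complex.I = 0 := by
    push_cast
    linear_combination hm'
  have hreal : (cnt a j : ℝ) * t - (cnt b j : ℝ) * t - 2 * Real.pi * m = 0 := by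
    have := mul_eq_zero.mp hI
    rcases this with h' | h'
    · exact_mod_cast h'
    · exact absurd h' Complex.I_ne_zero
  have hmne : m ≠ 0 := by
    intro h0
    rw [h0] at hreal
    push_cast at hreal
    have : (cnt a j : ℝ) = cnt b j := by
      have := sub_eq_zero.mp (by linarith : (cnt a j : ℝ) * t - (cnt b j : ℝ) * t = 0)
      exact mul_right_cancel₀ (ne_of_gt htpos) this
    exact hj (by exact_mod_cast this)
  have hm1 : (1 : ℝ) ≤ |(m : ℝ)| := by
    have := Int.one_le_abs hmne
    exact_mod_cast this
  have habs : |(cnt a j : ℝ) * t - (cnt b j : ℝ) * t| ≤ 1 := by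
    have h1 : (cnt a j : ℝ) ≤ n := by exact_mod_cast cnt_le a j
    have h2 : (cnt b j : ℝ) ≤ n := by exact_mod_cast cnt_le b j
    have h3 : (0:ℝ) ≤ (cnt a j : ℝ) := Nat.cast_nonneg _
    have h4 : (0:ℝ) ≤ (cnt b j : ℝ) := Nat.cast_nonneg _
    rw [abs_le]
    have hnt : (n : ℝ) * t = 1 := by
      rw [ht]; field_simp
    constructor <;> nlinarith
  have hpi := Real.pi_gt_three
  have : (2 * Real.pi) * |(m:ℝ)| ≤ 1 := by
    calc (2 * Real.pi) * |(m:ℝ)| = |2 * Real.pi * m| := by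
          rw [abs_mul]; congr 1; rw [abs_of_pos]; linarith
      _ = |(cnt a j : ℝ) * t - (cnt b j : ℝ) * t| := by
          have h5 : 2 * Real.pi * (m:ℝ) = (cnt a j : ℝ) * t - (cnt b j : ℝ) * t := by linarith
          rw [h5]
      _ ≤ 1 := habs
  nlinarith [hm1, hpi]


lemma permMatrix_mul_apply (σ : Equiv.Perm (Fin n)) (M : Matrix (Fin n → Fin d) (Fin n → Fin d) ℂ)
    (a b : Fin n → Fin d) :
    (permMatrix (Fin n) d σ * M) a b = M (fun k => a (σ k)) b := by
  rw [Matrix.mul_apply]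
  rw [Finset.sum_eq_single (fun k => a (σ k))]
  · simp [permMatrix]
  · intro c _ hc
    rw [permMatrix]
    simp only [Matrix.of_apply]
    rw [if_neg, zero_mul]
    intro hcon
    apply hc
    funext k
    have := congrFun hcon (σ k)
    simpa using this.symm
  · exact fun h => absurd (Finset.mem_univ _) h

lemma mul_permMatrix_apply (τ : Equiv.Perm (Fin n)) (M : Matrix (Fin n → Fin d) (Fin n → Fin d) ℂ)
    (a b : Fin n → Fin d) :
    (M * permMatrix (Fin n) d τ) a b = M a (fun k => b (τ⁻¹ k)) := by
  rw [Matrix.mul_apply]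
  rw [Finset.sum_eq_single (fun k => b (τ⁻¹ k))]
  · simp [permMatrix]
  · intro c _ hc
    rw [permMatrix]
    simp only [Matrix.of_apply]
    rw [if_neg, mul_zero]
    intro hcon
    exact hc hcon
  · exact fun h => absurd (Finset.mem_univ _) h

lemma triple_entry (X : Matrix (Fin n → Fin d) (Fin n → Fin d) ℂ) (a b : Fin n → Fin d) :
    (symProj (Fin n) d * X * symProj (Fin n) d) a b
      = ((n.factorial : ℂ)⁻¹ * (n.factorial : ℂ)⁻¹) *
        ∑ σ : Equiv.Perm (Fin n), ∑ τ : Equiv.Perm (Fin n),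
          X (fun k => a (σ k)) (fun k => b (τ⁻¹ k)) := by
  unfold symProj
  simp only [Fintype.card_fin]
  rw [Matrix.smul_mul, Matrix.smul_mul, Matrix.mul_smul]
  simp only [Matrix.smul_apply, smul_eq_mul]
  rw [Finset.sum_mul, Finset.sum_mul, Matrix.sum_apply]
  have : ∀ σ : Equiv.Perm (Fin n),
      ((permMatrix (Fin n) d σ * X) * ∑ τ : Equiv.Perm (Fin n), permMatrix (Fin n) d τ) a b
      = ∑ τ : Equiv.Perm (Fin n), X (fun k => a (σ k)) (fun k => b (τ⁻¹ k)) := by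
    intro σ
    rw [Matrix.mul_sum, Matrix.sum_apply]
    exact Finset.sum_congr rfl fun τ _ => by
      rw [mul_permMatrix_apply, permMatrix_mul_apply]
  rw [Finset.sum_congr rfl fun σ _ => this σ]
  ring

lemma X_block_const {n d : ℕ} (X : Matrix (Fin n → Fin d) (Fin n → Fin d) ℂ)
    (hX : symProj (Fin n) d * X * symProj (Fin n) d = X)
    {a b a' b' : Fin n → Fin d} (ha : cnt a = cnt a') (hb : cnt b = cnt b') :
    X a b = X a' b' := by
  obtain ⟨ρ, hρ⟩ := exists_perm_of_cnt_eq ha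
  obtain ⟨π, hπ⟩ := exists_perm_of_cnt_eq hb
  have key : ∀ u v : Fin n → Fin d,
      X u v = ((n.factorial : ℂ)⁻¹ * (n.factorial : ℂ)⁻¹) *
        ∑ σ : Equiv.Perm (Fin n), ∑ τ : Equiv.Perm (Fin n),
          X (fun k => u (σ k)) (fun k => v (τ⁻¹ k)) := by
    intro u v
    conv_lhs => rw [← hX]
    exact triple_entry X u v
  rw [key a b, key a' b']
  congr 1
  refine (Fintype.sum_equiv (Equiv.mulLeft ρ)
    (fun σ => ∑ τ : Equiv.Perm (Fin n), X (fun k => a' (σ k)) (fun k => b' (τ⁻¹ k)))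
    (fun σ => ∑ τ : Equiv.Perm (Fin n), X (fun k => a (σ k)) (fun k => b (τ⁻¹ k)))
    (fun σ => ?_)).symm
  refine Fintype.sum_equiv (Equiv.mulRight π⁻¹)
    (fun τ => X (fun k => a' (σ k)) (fun k => b' (τ⁻¹ k)))
    (fun τ => X (fun k => a ((Equiv.mulLeft ρ σ) k)) (fun k => b (τ⁻¹ k)))
    (fun τ => ?_)
  subst hρ
  subst hπ
  rfl

end Aux

/-- a diagonally symmetric `n`-partite matrix `X` is separable (a non-negative
combination of `|v⟩⟨v|^{⊗n}`) iff the symmetric tensor `Q[X]_i = ⟨i|X|i⟩` is completely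
positive, i.e. a finite sum of tensor powers `w^{⊗n}` of entrywise non-negative vectors. -/
theorem stmt_13 (n d : ℕ) (X : Matrix (Fin n → Fin d) (Fin n → Fin d) ℂ)
    (hDS : IsDS (Fin n) d X) :
    (∃ (K : ℕ) (v : Fin K → Fin d → ℂ),
        X = ∑ q, Matrix.of fun a b : Fin n → Fin d =>
          (∏ k, v q (a k)) * star (∏ k, v q (b k))) ↔
      ∃ (K : ℕ) (w : Fin K → Fin d → ℝ), (∀ q i, 0 ≤ w q i) ∧
        ∀ i : Fin n → Fin d, X i i = ((∑ q, ∏ k, w q (i k) : ℝ) : ℂ) := by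
  obtain ⟨hProj, hU⟩ := hDS
  constructor
  · rintro ⟨K, v, hX⟩
    refine ⟨K, fun q i => Complex.normSq (v q i), fun q i => Complex.normSq_nonneg _, fun i => ?_⟩
    rw [hX, Matrix.sum_apply, Complex.ofReal_sum]
    refine Finset.sum_congr rfl fun q _ => ?_
    simp only [Matrix.of_apply]
    rw [Complex.star_def, Complex.mul_conj]
    exact congrArg _ (map_prod Complex.normSq _ _)
  · rintro ⟨K, w, hw, hdiag⟩
    rcases Nat.eq_zero_or_pos n with hn | hn
    · subst hn
      refine ⟨K, fun _ _ => 1, ?_⟩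
      ext a b
      have hab : a = b := Subsingleton.elim a b
      subst hab
      rw [Matrix.sum_apply]
      have hd := hdiag a
      simp only [Finset.univ_eq_empty, Finset.prod_empty] at hd
      simp only [Matrix.of_apply, Finset.univ_eq_empty, Finset.prod_empty, star_one, mul_one]
      rw [hd]
      simp
    · -- main case: n ≥ 1
      have hBpos : (0:ℝ) < ((n + 1 : ℕ) : ℝ) ^ d := by positivity
      set c : ℝ := (((n + 1 : ℕ) : ℝ) ^ d) ^ (-(2 * (n : ℝ)))⁻¹ with hcdef
      have hc2 : c ^ (2 * n) * ((n + 1 : ℕ) : ℝ) ^ d = 1 := by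
        rw [hcdef, ← Real.rpow_natCast ((((n + 1 : ℕ) : ℝ) ^ d) ^ (-(2 * (n : ℝ)))⁻¹) (2 * n),
          ← Real.rpow_mul hBpos.le]
        have hne : (2 * (n : ℝ)) ≠ 0 := by
          have : (0:ℝ) < (n:ℝ) := by exact_mod_cast hn
          positivity
        have hexp : ((-(2 * (n : ℝ)))⁻¹ * ((2 * n : ℕ) : ℝ)) = -1 := by
          push_cast
          rw [inv_neg, neg_mul, inv_mul_cancel₀ hne]
        rw [hexp, Real.rpow_neg_one]
        exact inv_mul_cancel₀ hBpos.ne'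
      let e : Fin (K * (n + 1) ^ d) ≃ (Fin K × (Fin d → Fin (n + 1))) :=
        Fintype.equivOfCardEq (by simp [Fintype.card_fun])
      refine ⟨K * (n + 1) ^ d, fun q j =>
        ((c * Real.sqrt (w (e q).1 j) : ℝ) : ℂ) * Ee (n + 1) (((e q).2 j : ℕ) : ℤ), ?_⟩
      ext a b
      rw [Matrix.sum_apply]
      simp only [Matrix.of_apply]
      have transport : ∑ q : Fin (K * (n + 1) ^ d),
          (∏ k, (((c * Real.sqrt (w (e q).1 (a k)) : ℝ) : ℂ) * Ee (n + 1) (((e q).2 (a k) : ℕ) : ℤ))) *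
            star (∏ k, (((c * Real.sqrt (w (e q).1 (b k)) : ℝ) : ℂ) * Ee (n + 1) (((e q).2 (b k) : ℕ) : ℤ)))
          = ∑ p : Fin K × (Fin d → Fin (n + 1)),
          (∏ k, (((c * Real.sqrt (w p.1 (a k)) : ℝ) : ℂ) * Ee (n + 1) ((p.2 (a k) : ℕ) : ℤ))) *
            star (∏ k, (((c * Real.sqrt (w p.1 (b k)) : ℝ) : ℂ) * Ee (n + 1) ((p.2 (b k) : ℕ) : ℤ))) :=
        Fintype.sum_equiv e _ _ (fun q => rfl)
      rw [transport, backward_sum K w hw c hc2 a b]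
      by_cases h : cnt a = cnt b
      · rw [if_pos h]
        rw [X_block_const X hProj rfl h.symm, hdiag a]
      · rw [if_neg h]
        exact X_offtype_zero X hU h
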